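/- In the m-agent word-of-mouth model, the denominator D(ρ) = λ_e + Σ_{i=1}^{m−1} γ^{(i)}(ρ) can be written as D(ρ) = a ρ^{2^m − 2} + g(ρ), where a = λ_e^{2^{m−1}} ∏_{i=1}^{m−1}(λ_w^{(i)})^{2^{m−1−i}} and g is a polynomial of degree strictly less than 2^m − 2 with positive coefficients (hence strictly increasing on ℝ₊ and bounded below by λ_e). -/

import Mathlib

open Finset Polynomial

/-- A polynomial whose coefficients up to `d` are positive and zero above `d`. -/
def GoodP (Q : Polynomial ℝ) (d : ℕ) : Prop :=
  (∀ i ≤ d, 0 < Q.coeff i) ∧ ∀ i, d < i → Q.coeff i = 0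

lemma GoodP.coeff_nonneg {Q : Polynomial ℝ} {d : ℕ} (h : GoodP Q d) (i : ℕ) :
    0 ≤ Q.coeff i := by
  by_cases hi : i ≤ d
  · exact (h.1 i hi).le
  · rw [h.2 i (by omega)]

lemma GoodP.natDegree_eq {Q : Polynomial ℝ} {d : ℕ} (h : GoodP Q d) : Q.natDegree = d := by
  apply le_antisymm
  · exact Polynomial.natDegree_le_iff_coeff_eq_zero.mpr (fun i hi => h.2 i hi)
  · exact Polynomial.le_natDegree_of_ne_zero (ne_of_gt (h.1 d le_rfl))

lemma GoodP.mul {Q R : Polynomial ℝ} {d e : ℕ} (hQ : GoodP Q d) (hR : GoodP R e) :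
    GoodP (Q * R) (d + e) ∧ (Q * R).coeff (d + e) = Q.coeff d * R.coeff e := by
  have htop : (Q * R).coeff (d + e) = Q.coeff d * R.coeff e := by
    have := Polynomial.coeff_mul_degree_add_degree Q R
    rwa [hQ.natDegree_eq, hR.natDegree_eq, Polynomial.leadingCoeff, Polynomial.leadingCoeff,
      hQ.natDegree_eq, hR.natDegree_eq] at this
  refine ⟨⟨?_, ?_⟩, htop⟩
  · intro k hk
    rw [Polynomial.coeff_mul]
    apply Finset.sum_pos'
    · intro x _
      exact mul_nonneg (hQ.coeff_nonneg _) (hR.coeff_nonneg _)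
    · refine ⟨(min k d, k - min k d), ?_, ?_⟩
      · rw [Finset.HasAntidiagonal.mem_antidiagonal]
        have := min_le_left k d; omega
      · have h1 : min k d ≤ d := min_le_right _ _
        have h2 : k - min k d ≤ e := by
          rcases le_total k d with h | h
          · rw [min_eq_left h]; omega
          · rw [min_eq_right h]; omega
        exact mul_pos (hQ.1 _ h1) (hR.1 _ h2)
  · intro k hk
    rw [Polynomial.coeff_mul]
    apply Finset.sum_eq_zero
    intro x hx
    rw [Finset.HasAntidiagonal.mem_antidiagonal] at hx
    by_cases h1 : x.1 ≤ d
    · rw [hR.2 x.2 (by omega), mul_zero]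
    · rw [hQ.2 x.1 (by omega), zero_mul]

lemma GoodP.add {Q R : Polynomial ℝ} {d e : ℕ} (hQ : GoodP Q d) (hR : GoodP R e)
    (hed : e ≤ d) : GoodP (R + Q) d := by
  constructor
  · intro i hi
    rw [Polynomial.coeff_add]
    exact add_pos_of_nonneg_of_pos (hR.coeff_nonneg i) (hQ.1 i hi)
  · intro i hi
    rw [Polynomial.coeff_add, hQ.2 i hi, hR.2 i (by omega), add_zero]

lemma goodP_C {c : ℝ} (hc : 0 < c) : GoodP (Polynomial.C c) 0 := by
  constructor
  · intro i hi
    interval_cases i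
    simpa using hc
  · intro i hi
    rw [Polynomial.coeff_C, if_neg (by omega)]

lemma goodP_one_add_X_mul {Q : Polynomial ℝ} {d : ℕ} (hQ : GoodP Q d) :
    GoodP (1 + Polynomial.X * Q) (d + 1)
      ∧ (1 + Polynomial.X * Q).coeff (d + 1) = Q.coeff d := by
  have hc : ∀ n : ℕ, (1 + Polynomial.X * Q).coeff (n + 1) = Q.coeff n := by
    intro n
    rw [Polynomial.coeff_add, Polynomial.coeff_X_mul, Polynomial.coeff_one,
      if_neg (by omega), zero_add]
  refine ⟨⟨?_, ?_⟩, hc d⟩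
  · intro i hi
    match i with
    | 0 => simp [Polynomial.coeff_one]
    | (n+1) => rw [hc n]; exact hQ.1 n (by omega)
  · intro i hi
    match i with
    | 0 => omega
    | (n+1) => rw [hc n]; exact hQ.2 n (by omega)

/-- The partial-denominator polynomials. -/
noncomputable def Pden (lam_e : ℝ) (lam_w : ℕ → ℝ) : ℕ → Polynomial ℝ
  | 0 => Polynomial.C lam_e
  | (j+1) => Pden lam_e lam_w j +
      Polynomial.C (lam_w (j+1)) * (1 + Polynomial.X * Pden lam_e lam_w j) ^ 2

section Pden

variable {lam_e : ℝ} {lam_w : ℕ → ℝ}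

lemma Pden_good (hle : 0 < lam_e) (hlw : ∀ i, 0 < lam_w i) (j : ℕ) :
    GoodP (Pden lam_e lam_w j) (2 ^ (j+1) - 2)
      ∧ (Pden lam_e lam_w j).coeff (2 ^ (j+1) - 2)
        = lam_e ^ (2 ^ j) * ∏ i ∈ Finset.Icc 1 j, lam_w i ^ (2 ^ (j - i)) := by
  induction j with
  | zero =>
    refine ⟨by simpa [Pden] using goodP_C hle, ?_⟩
    simp [Pden]
  | succ j ih =>
    obtain ⟨hg, hc⟩ := ih
    set d : ℕ := 2 ^ (j+1) - 2 with hd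
    have h2 : 2 ≤ 2 ^ (j+1) := by
      calc 2 = 2 ^ 1 := by norm_num
      _ ≤ 2 ^ (j+1) := Nat.pow_le_pow_right (by norm_num) (by omega)
    have hD : 2 ^ (j+2) - 2 = 0 + ((d + 1) + (d + 1)) := by
      have : 2 ^ (j+2) = 2 * 2 ^ (j+1) := by rw [pow_succ]; ring
      omega
    obtain ⟨hg1, hc1⟩ := goodP_one_add_X_mul hg
    obtain ⟨hg2, hc2⟩ := hg1.mul hg1
    have hCg := goodP_C (hlw (j+1))
    obtain ⟨hg3, hc3⟩ := hCg.mul hg2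
    have hgood : GoodP (Pden lam_e lam_w (j+1)) (2 ^ (j+2) - 2) := by
      rw [hD]
      show GoodP (Pden lam_e lam_w j +
        Polynomial.C (lam_w (j+1)) * (1 + Polynomial.X * Pden lam_e lam_w j) ^ 2) _
      rw [sq]
      exact hg3.add hg (by omega)
    refine ⟨hgood, ?_⟩
    have hcoeff : (Pden lam_e lam_w (j+1)).coeff (2 ^ (j+2) - 2)
        = lam_w (j+1) * ((Pden lam_e lam_w j).coeff d) ^ 2 := by
      show (Pden lam_e lam_w j +
        Polynomial.C (lam_w (j+1)) * (1 + Polynomial.X * Pden lam_e lam_w j) ^ 2).coeff _ = _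
      rw [Polynomial.coeff_add, hg.2 _ (by omega), zero_add, hD, sq, hc3, hc2, hc1,
        Polynomial.coeff_C_zero, sq]
    rw [hcoeff, hc]
    rw [Finset.prod_Icc_succ_top (by omega)]
    have h1 : lam_w (j+1) ^ (2 ^ (j + 1 - (j+1))) = lam_w (j+1) := by norm_num
    have h2' : (lam_e ^ (2 ^ j)) ^ 2 = lam_e ^ (2 ^ (j+1)) := by
      rw [← pow_mul, pow_succ]
    have h3 : (∏ i ∈ Finset.Icc 1 j, lam_w i ^ (2 ^ (j - i))) ^ 2
        = ∏ i ∈ Finset.Icc 1 j, lam_w i ^ (2 ^ (j + 1 - i)) := by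
      rw [← Finset.prod_pow]
      apply Finset.prod_congr rfl
      intro i hi
      rw [Finset.mem_Icc] at hi
      rw [← pow_mul]
      congr 1
      have : j + 1 - i = (j - i) + 1 := by omega
      rw [this, pow_succ]
    rw [h1, mul_pow, h2', h3]
    ring

lemma Pden_eval (γ : ℕ → ℝ → ℝ)
    (hγ : ∀ j : ℕ, 1 ≤ j → ∀ ρ : ℝ,
      γ j ρ = lam_w j * (1 + ρ * (lam_e + ∑ i ∈ Finset.Icc 1 (j - 1), γ i ρ)) ^ 2)
    (j : ℕ) (ρ : ℝ) :
    (Pden lam_e lam_w j).eval ρ = lam_e + ∑ i ∈ Finset.Icc 1 j, γ i ρ := by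
  induction j with
  | zero => simp [Pden]
  | succ j ih =>
    rw [Finset.sum_Icc_succ_top (by omega), hγ (j+1) (by omega)]
    simp only [Nat.add_sub_cancel]
    show (Pden lam_e lam_w j +
      Polynomial.C (lam_w (j+1)) * (1 + Polynomial.X * Pden lam_e lam_w j) ^ 2).eval ρ = _
    simp only [Polynomial.eval_add, Polynomial.eval_mul, Polynomial.eval_pow,
      Polynomial.eval_one, Polynomial.eval_X, Polynomial.eval_C, ih]
    ring

lemma Pden_coeff_zero (hlw : ∀ i, 0 < lam_w i) (j : ℕ) : lam_e ≤ (Pden lam_e lam_w j).coeff 0 := by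
  induction j with
  | zero => simp [Pden]
  | succ j ih =>
    show lam_e ≤ (Pden lam_e lam_w j +
      Polynomial.C (lam_w (j+1)) * (1 + Polynomial.X * Pden lam_e lam_w j) ^ 2).coeff 0
    rw [Polynomial.coeff_add, sq, Polynomial.mul_coeff_zero, Polynomial.mul_coeff_zero,
      Polynomial.coeff_add, Polynomial.mul_coeff_zero, Polynomial.coeff_X_zero,
      Polynomial.coeff_C_zero, Polynomial.coeff_one]
    have := hlw (j+1)
    nlinarith

end Pden

lemma goodP_strictMonoOn {g : Polynomial ℝ} {d : ℕ} (h : GoodP g d) (hd : 1 ≤ d) :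
    StrictMonoOn (fun ρ : ℝ => g.eval ρ) (Set.Ici 0) := by
  intro x hx y hy hxy
  simp only
  rw [Polynomial.eval_eq_sum_range, Polynomial.eval_eq_sum_range, h.natDegree_eq]
  apply Finset.sum_lt_sum
  · intro i _
    exact mul_le_mul_of_nonneg_left (pow_le_pow_left₀ hx hxy.le i) (h.coeff_nonneg i)
  · refine ⟨1, Finset.mem_range.mpr (by omega), ?_⟩
    have hc := h.1 1 hd
    simp only [pow_one]
    exact mul_lt_mul_of_pos_left hxy hc

lemma goodP_eval_ge_coeff_zero {g : Polynomial ℝ} {d : ℕ} (h : GoodP g d) {ρ : ℝ}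
    (hρ : 0 ≤ ρ) : g.coeff 0 ≤ g.eval ρ := by
  rw [Polynomial.eval_eq_sum_range]
  have h0 : g.coeff 0 = g.coeff 0 * ρ ^ 0 := by simp
  rw [h0]
  apply Finset.single_le_sum (f := fun i => g.coeff i * ρ ^ i)
  · intro i _
    exact mul_nonneg (h.coeff_nonneg i) (pow_nonneg hρ i)
  · simp

/-- The denominator `D(ρ) = λ_e + Σ_{i=1}^{m−1} γ⁽ⁱ⁾(ρ)` can be written as
`D(ρ) = a ρ^{2^m − 2} + g(ρ)` with `a = λ_e^{2^{m−1}} ∏_{i=1}^{m−1} (λ_w⁽ⁱ⁾)^{2^{m−1−i}}`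
and `g` a polynomial of degree `< 2^m − 2` with positive coefficients, hence strictly
increasing on `ℝ₊` and bounded below by `λ_e`. -/
theorem denominator_structure
    (m : ℕ) (hm : 2 ≤ m)
    (lam_e : ℝ) (lam_w : ℕ → ℝ) (hle : 0 < lam_e) (hlw : ∀ i, 0 < lam_w i)
    (γ : ℕ → ℝ → ℝ)
    (hγ : ∀ j : ℕ, 1 ≤ j → ∀ ρ : ℝ,
      γ j ρ = lam_w j * (1 + ρ * (lam_e + ∑ i ∈ Finset.Icc 1 (j - 1), γ i ρ)) ^ 2) :
    ∃ g : Polynomial ℝ,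
      (∀ ρ : ℝ, lam_e + ∑ i ∈ Finset.Icc 1 (m - 1), γ i ρ
        = (lam_e ^ (2 ^ (m - 1)) * ∏ i ∈ Finset.Icc 1 (m - 1), lam_w i ^ (2 ^ (m - 1 - i)))
            * ρ ^ (2 ^ m - 2) + g.eval ρ)
      ∧ g.natDegree < 2 ^ m - 2
      ∧ (∀ i ≤ g.natDegree, 0 < g.coeff i)
      ∧ StrictMonoOn (fun ρ : ℝ => g.eval ρ) (Set.Ici 0)
      ∧ ∀ ρ : ℝ, 0 ≤ ρ → lam_e ≤ g.eval ρ := by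
  set j := m - 1 with hj
  have hjm : j + 1 = m := by omega
  set N : ℕ := 2 ^ m - 2 with hN
  have hN4 : 4 ≤ 2 ^ m := by
    calc (4:ℕ) = 2 ^ 2 := by norm_num
    _ ≤ 2 ^ m := Nat.pow_le_pow_right (by norm_num) hm
  have hN2 : 2 ≤ N := by omega
  obtain ⟨hgood, hcoeff⟩ := Pden_good (lam_e := lam_e) (lam_w := lam_w) hle hlw j
  rw [hjm] at hgood hcoeff
  set D := Pden lam_e lam_w j with hD
  set a : ℝ := lam_e ^ (2 ^ (m - 1)) * ∏ i ∈ Finset.Icc 1 (m - 1), lam_w i ^ (2 ^ (m - 1 - i))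
    with ha
  have hca : D.coeff N = a := hcoeff
  set g : Polynomial ℝ := D - Polynomial.C a * Polynomial.X ^ N with hg
  have hgc : ∀ i : ℕ, g.coeff i = D.coeff i - a * (if i = N then 1 else 0) := by
    intro i
    rw [hg, Polynomial.coeff_sub, Polynomial.coeff_C_mul, Polynomial.coeff_X_pow]
  have hggood : GoodP g (N - 1) := by
    constructor
    · intro i hi
      rw [hgc i, if_neg (by omega), mul_zero, sub_zero]
      exact hgood.1 i (by omega)
    · intro i hi
      rcases eq_or_lt_of_le (show N ≤ i by omega) with h | h
      · rw [hgc i, ← h, if_pos rfl, mul_one, hca, sub_self]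
      · rw [hgc i, if_neg (by omega), mul_zero, sub_zero]
        exact hgood.2 i h
  refine ⟨g, ?_, ?_, ?_, ?_, ?_⟩
  · intro ρ
    have heval := Pden_eval (lam_e := lam_e) (lam_w := lam_w) γ hγ j ρ
    rw [← hD] at heval
    rw [← heval, hg]
    simp only [Polynomial.eval_sub, Polynomial.eval_mul, Polynomial.eval_pow,
      Polynomial.eval_C, Polynomial.eval_X]
    ring
  · rw [hggood.natDegree_eq]; omega
  · intro i hi
    rw [hggood.natDegree_eq] at hi
    exact hggood.1 i hi
  · exact goodP_strictMonoOn hggood (by omega)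
  · intro ρ hρ
    have h1 := goodP_eval_ge_coeff_zero hggood hρ
    have h2 : g.coeff 0 = D.coeff 0 := by
      rw [hgc 0, if_neg (by omega), mul_zero, sub_zero]
    have h3 := Pden_coeff_zero (lam_e := lam_e) (lam_w := lam_w) hlw j
    rw [← hD] at h3
    linarith
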